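/- Let X be a metric space and let ℒ be a collection of lines in X such that the union of the lines in ℒ is all of X and every pair of lines in ℒ is parallel. Then there exist a metric space Y and an isometric equivalence α : X ≃ ℝ ×₂ Y onto the ℓ²-product of ℝ and Y, such that ℒ = { α⁻¹(ℝ × {y}) : y ∈ Y }, i.e. the lines of ℒ are exactly the preimages under α of the horizontal lines ℝ × {y}. (Kleiner–Lott, 'Locally Collapsed 3-Manifolds', Sublemma 4.4, part (4).) -/

import Mathlib

universe u

/-- A line in a metric space: the image of an isometric embedding of `ℝ`. -/
def IsLine {X : Type*} [MetricSpace X] (L : Set X) : Prop :=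
  ∃ γ : ℝ → X, (∀ s t : ℝ, dist (γ s) (γ t) = |s - t|) ∧ Set.range γ = L

/-- Two lines `L₁`, `L₂` in a metric space are parallel if there is a
distance-preserving bijection of `L₁ ∪ L₂` onto the union of two parallel
lines `ℝ × {0}` and `ℝ × {a}` in the Euclidean plane, carrying `L₁` onto
`ℝ × {0}` and `L₂` onto `ℝ × {a}`. -/
def AreParallelLines {X : Type*} [MetricSpace X] (L₁ L₂ : Set X) : Prop :=
  ∃ a : ℝ, 0 ≤ a ∧ ∃ f : X → WithLp 2 (ℝ × ℝ),
    (∀ x ∈ L₁ ∪ L₂, ∀ y ∈ L₁ ∪ L₂, dist (f x) (f y) = dist x y) ∧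
    f '' L₁ = {p : WithLp 2 (ℝ × ℝ) | ((WithLp.equiv 2 (ℝ × ℝ)) p).2 = 0} ∧
    f '' L₂ = {p : WithLp 2 (ℝ × ℝ) | ((WithLp.equiv 2 (ℝ × ℝ)) p).2 = a}

lemma sq_of_abs_eq {a b : ℝ} (h : |a| = |b|) : a ^ 2 = b ^ 2 := by
  rw [← sq_abs a, h, sq_abs]

lemma dist_l2' {A B : Type*} [PseudoMetricSpace A] [PseudoMetricSpace B]
    (x y : WithLp 2 (A × B)) :
    dist x y = Real.sqrt (dist x.fst y.fst ^ 2 + dist x.snd y.snd ^ 2) := by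
  rw [WithLp.prod_dist_eq_add (by norm_num : 0 < (2 : ENNReal).toReal)]
  have h2 : (2 : ENNReal).toReal = 2 := by norm_num
  rw [h2, Real.rpow_two, Real.rpow_two, Real.sqrt_eq_rpow]

lemma no_linear (k w : ℝ) (h : ∀ t : ℝ, k * t + w ≤ 0) : k = 0 := by
  by_contra hk
  have h1 := h ((1 - w) / k)
  rw [mul_div_cancel₀ _ hk] at h1
  linarith

lemma real_isom (g : ℝ → ℝ) (hg : ∀ s t : ℝ, |g s - g t| = |s - t|) :
    ∃ ε : ℝ, ε ^ 2 = 1 ∧ ∀ t, g t = g 0 + ε * t := by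
  refine ⟨g 1 - g 0, by simpa using sq_of_abs_eq (hg 1 0), ?_⟩
  intro t
  have e1 : (g t - g 0) ^ 2 = t ^ 2 := by simpa using sq_of_abs_eq (hg t 0)
  have e2 : (g 1 - g 0) ^ 2 = 1 := by simpa using sq_of_abs_eq (hg 1 0)
  have e3 : (g t - g 1) ^ 2 = (t - 1) ^ 2 := sq_of_abs_eq (hg t 1)
  nlinarith [sq_nonneg (g t - g 0 - (g 1 - g 0) * t)]

lemma exists_aligned {X : Type*} [MetricSpace X] {γ₀ : ℝ → X} {L₀ L : Set X}
    (hγ₀ : ∀ s t : ℝ, dist (γ₀ s) (γ₀ t) = |s - t|) (hr : Set.range γ₀ = L₀)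
    (hp : AreParallelLines L₀ L) :
    ∃ γ : ℝ → X, (∀ s t : ℝ, dist (γ s) (γ t) = |s - t|) ∧ Set.range γ = L ∧
      ∃ a : ℝ, ∀ s t : ℝ, dist (γ₀ s) (γ t) = Real.sqrt ((s - t) ^ 2 + a ^ 2) := by
  obtain ⟨a, ha, f, hf, h1, h2⟩ := hp
  have hm0 : ∀ t : ℝ, γ₀ t ∈ L₀ ∪ L := fun t => Or.inl (hr ▸ Set.mem_range_self t)
  have hsnd0 : ∀ t : ℝ, (f (γ₀ t)).snd = 0 := by
    intro t
    have : f (γ₀ t) ∈ f '' L₀ := Set.mem_image_of_mem f (hr ▸ Set.mem_range_self t)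
    rw [h1] at this
    exact this
  set u : ℝ → ℝ := fun t => (f (γ₀ t)).fst with hu_def
  have hu : ∀ s t : ℝ, |u s - u t| = |s - t| := by
    intro s t
    have hd := hf _ (hm0 s) _ (hm0 t)
    rw [hγ₀, dist_l2', hsnd0, hsnd0] at hd
    simp only [dist_self, Real.dist_eq] at hd
    rw [← hd]
    rw [show |u s - u t| ^ 2 + (0:ℝ) ^ 2 = |u s - u t| ^ 2 by ring,
      Real.sqrt_sq (abs_nonneg _)]
  obtain ⟨ε, hε, hεu⟩ := real_isom u hu
  -- points of L above u t
  have hmem : ∀ t : ℝ, ∃ x ∈ L, f x = (WithLp.equiv 2 (ℝ × ℝ)).symm (u t, a) := by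
    intro t
    have : (WithLp.equiv 2 (ℝ × ℝ)).symm (u t, a) ∈ f '' L := by
      rw [h2]; simp
    obtain ⟨x, hx, hfx⟩ := this
    exact ⟨x, hx, hfx⟩
  choose γ hγL hγf using hmem
  have hmL : ∀ t : ℝ, γ t ∈ L₀ ∪ L := fun t => Or.inr (hγL t)
  have dist_pt : ∀ (w w' z z' : ℝ),
      dist ((WithLp.equiv 2 (ℝ × ℝ)).symm (w, z)) ((WithLp.equiv 2 (ℝ × ℝ)).symm (w', z')) =
        Real.sqrt ((w - w') ^ 2 + (z - z') ^ 2) := by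
    intro w w' z z'
    rw [dist_l2']
    simp [Real.dist_eq, sq_abs]
  have hfst0 : ∀ t : ℝ, (f (γ₀ t)).fst = u t := fun _ => rfl
  have hiso : ∀ s t : ℝ, dist (γ s) (γ t) = |s - t| := by
    intro s t
    have hus : u s - u t = ε * (s - t) := by rw [hεu s, hεu t]; ring
    rw [← hf _ (hmL s) _ (hmL t), hγf, hγf, dist_pt, hus,
      show (ε * (s - t)) ^ 2 + (a - a) ^ 2 = ε ^ 2 * (s - t) ^ 2 by ring,
      hε, one_mul, Real.sqrt_sq_eq_abs]
  have hrange : Set.range γ = L := by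
    apply Set.Subset.antisymm
    · rintro _ ⟨t, rfl⟩; exact hγL t
    · intro x hx
      have hfx : (f x).snd = a := by
        have := Set.mem_image_of_mem f hx; rw [h2] at this; exact this
      set t := ε * ((f x).fst - u 0) with ht
      have hut : u t = (f x).fst := by
        rw [hεu, ht]; linear_combination ((f x).fst - u 0) * hε
      have hd0 : dist x (γ t) = 0 := by
        rw [← hf _ (Or.inr hx) _ (hmL t), hγf, dist_l2']
        simp [WithLp.equiv_symm_apply, WithLp.toLp_fst, WithLp.toLp_snd, hut, hfx]
      exact ⟨t, (dist_eq_zero.mp hd0).symm⟩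
  refine ⟨γ, hiso, hrange, a, ?_⟩
  intro s t
  rw [← hf _ (hm0 s) _ (hmL t), hγf, dist_l2']
  simp only [WithLp.equiv_symm_apply, WithLp.toLp_fst, WithLp.toLp_snd, Real.dist_eq, hfst0, hsnd0]
  rw [hu s t]
  congr 1
  rw [sq_abs, sq_abs]
  ring

lemma bend (b₁ b₂ s t : ℝ) (h1 : 0 ≤ b₁) (h2 : 0 ≤ b₂) :
    ∃ q : ℝ, Real.sqrt ((q - s) ^ 2 + b₁ ^ 2) + Real.sqrt ((q - t) ^ 2 + b₂ ^ 2)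
      = Real.sqrt ((s - t) ^ 2 + (b₁ + b₂) ^ 2) := by
  rcases eq_or_lt_of_le (by positivity : (0:ℝ) ≤ b₁ + b₂) with hS | hS
  · have hb1 : b₁ = 0 := by linarith
    have hb2 : b₂ = 0 := by linarith
    exact ⟨s, by simp [hb1, hb2]⟩
  · refine ⟨(b₁ * t + b₂ * s) / (b₁ + b₂), ?_⟩
    have hSne : b₁ + b₂ ≠ 0 := ne_of_gt hS
    have e1 : (b₁ * t + b₂ * s) / (b₁ + b₂) - s = b₁ * (t - s) / (b₁ + b₂) := by
      field_simp; ring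
    have e2 : (b₁ * t + b₂ * s) / (b₁ + b₂) - t = b₂ * (s - t) / (b₁ + b₂) := by
      field_simp; ring
    have g1 : Real.sqrt ((b₁ * (t - s) / (b₁ + b₂)) ^ 2 + b₁ ^ 2)
        = b₁ / (b₁ + b₂) * Real.sqrt ((s - t) ^ 2 + (b₁ + b₂) ^ 2) := by
      rw [show (b₁ * (t - s) / (b₁ + b₂)) ^ 2 + b₁ ^ 2
          = (b₁ / (b₁ + b₂)) ^ 2 * ((s - t) ^ 2 + (b₁ + b₂) ^ 2) from by field_simp; ring,
        Real.sqrt_mul (sq_nonneg _), Real.sqrt_sq (by positivity)]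
    have g2 : Real.sqrt ((b₂ * (s - t) / (b₁ + b₂)) ^ 2 + b₂ ^ 2)
        = b₂ / (b₁ + b₂) * Real.sqrt ((s - t) ^ 2 + (b₁ + b₂) ^ 2) := by
      rw [show (b₂ * (s - t) / (b₁ + b₂)) ^ 2 + b₂ ^ 2
          = (b₂ / (b₁ + b₂)) ^ 2 * ((s - t) ^ 2 + (b₁ + b₂) ^ 2) from by field_simp,
        Real.sqrt_mul (sq_nonneg _), Real.sqrt_sq (by positivity)]
    rw [e1, e2, g1, g2, ← add_mul,
      show b₁ / (b₁ + b₂) + b₂ / (b₁ + b₂) = 1 from by field_simp, one_mul]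

lemma aligned_pair {X : Type*} [MetricSpace X] {γ₀ γ₁ γ₂ : ℝ → X} {a₁ a₂ : ℝ}
    (h1 : ∀ s t : ℝ, dist (γ₁ s) (γ₁ t) = |s - t|)
    (h2 : ∀ s t : ℝ, dist (γ₂ s) (γ₂ t) = |s - t|)
    (hal1 : ∀ s t : ℝ, dist (γ₀ s) (γ₁ t) = Real.sqrt ((s - t) ^ 2 + a₁ ^ 2))
    (hal2 : ∀ s t : ℝ, dist (γ₀ s) (γ₂ t) = Real.sqrt ((s - t) ^ 2 + a₂ ^ 2))
    (hp : AreParallelLines (Set.range γ₁) (Set.range γ₂)) :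
    ∀ s t : ℝ, dist (γ₁ s) (γ₂ t) =
      Real.sqrt ((s - t) ^ 2 + dist (γ₁ 0) (γ₂ 0) ^ 2) := by
  obtain ⟨a, ha, f, hf, hf1, hf2⟩ := hp
  set S := |a₁| + |a₂| with hS
  have hS0 : (0:ℝ) ≤ S := by positivity
  have hm1 : ∀ t : ℝ, γ₁ t ∈ Set.range γ₁ ∪ Set.range γ₂ :=
    fun t => Or.inl (Set.mem_range_self t)
  have hm2 : ∀ t : ℝ, γ₂ t ∈ Set.range γ₁ ∪ Set.range γ₂ :=
    fun t => Or.inr (Set.mem_range_self t)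
  have hsnd1 : ∀ t : ℝ, (f (γ₁ t)).snd = 0 := by
    intro t
    have : f (γ₁ t) ∈ f '' Set.range γ₁ := Set.mem_image_of_mem f (Set.mem_range_self t)
    rw [hf1] at this; exact this
  have hsnd2 : ∀ t : ℝ, (f (γ₂ t)).snd = a := by
    intro t
    have : f (γ₂ t) ∈ f '' Set.range γ₂ := Set.mem_image_of_mem f (Set.mem_range_self t)
    rw [hf2] at this; exact this
  set u : ℝ → ℝ := fun t => (f (γ₁ t)).fst with hu_def
  set v : ℝ → ℝ := fun t => (f (γ₂ t)).fst with hv_def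
  have habs : ∀ (g : ℝ → X) (w : ℝ → ℝ),
      (∀ t : ℝ, g t ∈ Set.range γ₁ ∪ Set.range γ₂) →
      (∀ t : ℝ, (f (g t)).fst = w t) → (∀ t : ℝ, (f (g t)).snd = (f (g 0)).snd) →
      (∀ s t : ℝ, dist (g s) (g t) = |s - t|) → ∀ s t : ℝ, |w s - w t| = |s - t| := by
    intro g w hm hw hsnd hgiso s t
    have hd := hf _ (hm s) _ (hm t)
    rw [hgiso, dist_l2', hw, hw, hsnd s, hsnd t] at hd
    simp only [dist_self, Real.dist_eq] at hd
    rw [← hd, show |w s - w t| ^ 2 + (0:ℝ) ^ 2 = |w s - w t| ^ 2 from by ring,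
      Real.sqrt_sq (abs_nonneg _)]
  have hu : ∀ s t : ℝ, |u s - u t| = |s - t| :=
    habs γ₁ u hm1 (fun _ => rfl) (fun t => by rw [hsnd1, hsnd1]) h1
  have hv : ∀ s t : ℝ, |v s - v t| = |s - t| :=
    habs γ₂ v hm2 (fun _ => rfl) (fun t => by rw [hsnd2, hsnd2]) h2
  obtain ⟨ε, hε, hεu⟩ := real_isom u hu
  obtain ⟨δ, hδ, hδv⟩ := real_isom v hv
  have hd : ∀ s t : ℝ, dist (γ₁ s) (γ₂ t) = Real.sqrt ((u s - v t) ^ 2 + a ^ 2) := by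
    intro s t
    rw [← hf _ (hm1 s) _ (hm2 t), dist_l2', hsnd1, hsnd2]
    congr 1
    rw [Real.dist_eq, Real.dist_eq, sq_abs, sq_abs]
    ring
  have k1 : ∀ t : ℝ, dist (γ₀ t) (γ₁ t) = |a₁| := by
    intro t; rw [hal1]; simp [Real.sqrt_sq_eq_abs]
  have k2 : ∀ t : ℝ, dist (γ₀ t) (γ₂ t) = |a₂| := by
    intro t; rw [hal2]; simp [Real.sqrt_sq_eq_abs]
  have hbound : ∀ t : ℝ, (u t - v t) ^ 2 + a ^ 2 ≤ S ^ 2 := by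
    intro t
    have htri : dist (γ₁ t) (γ₂ t) ≤ S := by
      calc dist (γ₁ t) (γ₂ t) ≤ dist (γ₁ t) (γ₀ t) + dist (γ₀ t) (γ₂ t) := dist_triangle _ _ _
        _ = S := by rw [dist_comm (γ₁ t), k1, k2]
    rw [hd] at htri
    have hnn : (0:ℝ) ≤ (u t - v t) ^ 2 + a ^ 2 := by positivity
    nlinarith [Real.sq_sqrt hnn, Real.sqrt_nonneg ((u t - v t) ^ 2 + a ^ 2)]
  have hεδ : ε = δ := by
    by_contra hne
    have hk : ε - δ ≠ 0 := sub_ne_zero.mpr hne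
    set T := (S + 1 - (u 0 - v 0)) / (ε - δ) with hT
    have hb := hbound T
    rw [hεu T, hδv T] at hb
    have he : u 0 + ε * T - (v 0 + δ * T) = S + 1 := by
      have h' : (ε - δ) * T = S + 1 - (u 0 - v 0) := by rw [hT]; exact mul_div_cancel₀ _ hk
      linear_combination h'
    rw [he] at hb
    nlinarith [sq_nonneg a]
  subst hεδ
  set c := ε * (u 0 - v 0) with hc
  have hd' : ∀ s t : ℝ, dist (γ₁ s) (γ₂ t) = Real.sqrt ((s - t + c) ^ 2 + a ^ 2) := by
    intro s t
    rw [hd]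
    congr 1
    have huv : u s - v t = ε * (s - t + c) := by
      rw [hεu s, hδv t, hc]; linear_combination (v 0 - u 0) * hε
    rw [huv, mul_pow, hε, one_mul]
  have hub : ∀ s t : ℝ, dist (γ₁ s) (γ₂ t) ≤ Real.sqrt ((s - t) ^ 2 + S ^ 2) := by
    intro s t
    obtain ⟨q, hq⟩ := bend |a₁| |a₂| s t (abs_nonneg _) (abs_nonneg _)
    calc dist (γ₁ s) (γ₂ t) ≤ dist (γ₀ q) (γ₁ s) + dist (γ₀ q) (γ₂ t) := by
          rw [dist_comm (γ₀ q) (γ₁ s)]; exact dist_triangle _ _ _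
      _ = Real.sqrt ((q - s) ^ 2 + |a₁| ^ 2) + Real.sqrt ((q - t) ^ 2 + |a₂| ^ 2) := by
          rw [hal1, hal2, sq_abs, sq_abs]
      _ = Real.sqrt ((s - t) ^ 2 + S ^ 2) := hq
  have hsq : ∀ s t : ℝ, (s - t + c) ^ 2 + a ^ 2 ≤ (s - t) ^ 2 + S ^ 2 := by
    intro s t
    have h := hub s t
    rw [hd'] at h
    have hnn : (0:ℝ) ≤ (s - t + c) ^ 2 + a ^ 2 := by positivity
    nlinarith [Real.sq_sqrt hnn, Real.sq_sqrt (show (0:ℝ) ≤ (s - t) ^ 2 + S ^ 2 from by positivity),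
      Real.sqrt_nonneg ((s - t + c) ^ 2 + a ^ 2)]
  have hc0 : c = 0 := by
    have h2c := no_linear (2 * c) (c ^ 2 + a ^ 2 - S ^ 2) (fun r => by nlinarith [hsq r 0])
    linarith
  have hb : dist (γ₁ 0) (γ₂ 0) = |a| := by
    rw [hd' 0 0, hc0]
    norm_num [Real.sqrt_sq_eq_abs]
  intro s t
  rw [hd' s t, hc0, add_zero, hb, sq_abs]

/-- Kleiner–Lott, "Locally Collapsed 3-Manifolds", Sublemma 4.4(4): if a metric
space is covered by a family of pairwise parallel lines, then it splits
isometrically as `ℝ ×₂ Y`, with the given lines being precisely the horizontal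
lines `ℝ × {y}`. -/
theorem splitting_of_parallel_line_cover {X : Type u} [MetricSpace X]
    (ℒ : Set (Set X))
    (hline : ∀ L ∈ ℒ, IsLine L)
    (hcover : ⋃₀ ℒ = Set.univ)
    (hpar : ∀ L₁ ∈ ℒ, ∀ L₂ ∈ ℒ, AreParallelLines L₁ L₂) :
    ∃ (Y : Type u) (_ : MetricSpace Y) (α : X ≃ᵢ WithLp 2 (ℝ × Y)),
      ℒ = {L : Set X | ∃ y : Y,
        L = Set.range fun t : ℝ =>
          α.symm ((WithLp.equiv 2 (ℝ × Y)).symm (t, y))} := by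
  rcases isEmpty_or_nonempty X with hX | hX
  · haveI : IsEmpty (WithLp 2 (ℝ × ULift.{u} Empty)) :=
      (WithLp.equiv 2 (ℝ × ULift.{u} Empty)).isEmpty
    refine ⟨ULift.{u} Empty, inferInstance,
      ⟨Equiv.equivOfIsEmpty _ _, Isometry.of_dist_eq fun x _ => isEmptyElim x⟩, ?_⟩
    ext L
    simp only [Set.mem_setOf_eq]
    constructor
    · intro hL
      obtain ⟨γ, -, -⟩ := hline L hL
      exact isEmptyElim (γ 0)
    · rintro ⟨y, -⟩
      exact isEmptyElim y
  · obtain ⟨x₀⟩ := hX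
    obtain ⟨L₀, hL₀, -⟩ : x₀ ∈ ⋃₀ ℒ := hcover ▸ Set.mem_univ x₀
    obtain ⟨γ₀, hγ₀iso, hγ₀r⟩ := hline L₀ hL₀
    have key : ∀ L : ↥ℒ, ∃ γ : ℝ → X, (∀ s t : ℝ, dist (γ s) (γ t) = |s - t|) ∧
        Set.range γ = (L : Set X) ∧
        ∃ a : ℝ, ∀ s t : ℝ, dist (γ₀ s) (γ t) = Real.sqrt ((s - t) ^ 2 + a ^ 2) :=
      fun L => exists_aligned hγ₀iso hγ₀r (hpar L₀ hL₀ L L.2)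
    choose γ hiso hrange a halign using key
    have pair : ∀ L L' : ↥ℒ, ∀ s t : ℝ, dist (γ L s) (γ L' t) =
        Real.sqrt ((s - t) ^ 2 + dist (γ L 0) (γ L' 0) ^ 2) := by
      intro L L'
      refine aligned_pair (hiso L) (hiso L') (halign L) (halign L') ?_
      rw [hrange L, hrange L']
      exact hpar _ L.2 _ L'.2
    have einj : Function.Injective (fun L : ↥ℒ => γ L 0) := by
      intro L L' h
      have h' : γ L 0 = γ L' 0 := h
      have hall : ∀ t : ℝ, γ L t = γ L' t := by
        intro t
        apply dist_eq_zero.mp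
        rw [pair L L' t t, h']
        simp
      apply Subtype.ext
      rw [← hrange L, ← hrange L']
      exact congrArg Set.range (funext hall)
    letI mY : MetricSpace ↥ℒ := MetricSpace.induced (fun L : ↥ℒ => γ L 0) einj ‹_›
    have hβdist : ∀ p q : WithLp 2 (ℝ × ↥ℒ),
        dist (γ p.snd p.fst) (γ q.snd q.fst) = dist p q := by
      intro p q
      rw [pair p.snd q.snd p.fst q.fst, dist_l2' p q]
      congr 2
      rw [Real.dist_eq, sq_abs]
    have hbij : Function.Bijective
        (fun p : WithLp 2 (ℝ × ↥ℒ) => γ p.snd p.fst) := by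
      constructor
      · intro p q h
        have h0 : dist p q = 0 := by
          rw [← hβdist, show γ p.snd p.fst = γ q.snd q.fst from h, dist_self]
        rw [dist_l2'] at h0
        have hnn1 : (0:ℝ) ≤ dist p.fst q.fst := dist_nonneg
        have hnn2 : (0:ℝ) ≤ dist p.snd q.snd := dist_nonneg
        have hsum : dist p.fst q.fst ^ 2 + dist p.snd q.snd ^ 2 = 0 := by
          have hle := Real.sqrt_eq_zero'.mp h0
          nlinarith
        have e1 : p.fst = q.fst := dist_eq_zero.mp (by nlinarith)
        have e2 : p.snd = q.snd := dist_eq_zero.mp (by nlinarith)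
        exact (WithLp.equiv 2 (ℝ × ↥ℒ)).injective (Prod.ext e1 e2)
      · intro x
        obtain ⟨L, hL, hxL⟩ : x ∈ ⋃₀ ℒ := hcover ▸ Set.mem_univ x
        have : x ∈ Set.range (γ ⟨L, hL⟩) := by rw [hrange]; exact hxL
        obtain ⟨t, ht⟩ := this
        exact ⟨(WithLp.equiv 2 (ℝ × ↥ℒ)).symm (t, ⟨L, hL⟩), ht⟩
    set E : WithLp 2 (ℝ × ↥ℒ) ≃ᵢ X :=
      { toEquiv := Equiv.ofBijective _ hbij
        isometry_toFun := Isometry.of_dist_eq hβdist } with hE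
    refine ⟨↥ℒ, mY, E.symm, ?_⟩
    ext L
    simp only [Set.mem_setOf_eq, IsometryEquiv.symm_symm]
    constructor
    · intro hL
      exact ⟨⟨L, hL⟩, (hrange ⟨L, hL⟩).symm⟩
    · rintro ⟨y, rfl⟩
      have hr : (Set.range fun t : ℝ => E ((WithLp.equiv 2 (ℝ × ↥ℒ)).symm (t, y)))
          = Set.range (γ y) := rfl
      rw [hr, hrange]
      exact y.2
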